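/- The greedy construction terminates and produces a feasible solution: given finite support sets S_1,...,S_n with probability weights d_i, the process that repeatedly selects, for each measure, the first not-yet-fully-supplied support point, assigns to the resulting tuple the minimum remaining demand among the selected points, and subtracts that mass from each selected point's remaining demand, terminates with a nonnegative vector w satisfying Σ_{s : s_i = x} w(s) = d_i(x) for every i and x ∈ S_i. -/

import Mathlib

open scoped Classical

/-- One pass of Algorithm 3 (greedy construction) with explicit fuel: at each
step, for each measure select the first support point whose remaining demand is
nonzero, assign the minimum remaining demand among the selected points to that
tuple, and subtract it from each selected point's remaining demand. -/
noncomputable def greedy (n : ℕ) [NeZero n] (m : Fin n → ℕ) :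
    ℕ → (∀ i, Fin (m i) → ℝ) → ((∀ i, Fin (m i)) → ℝ)
  | 0, _ => 0
  | (fuel + 1), b =>
    if h : ∀ i, (Finset.univ.filter (fun j => b i j ≠ 0)).Nonempty then
      let sel : ∀ i, Fin (m i) :=
        fun i => (Finset.univ.filter (fun j => b i j ≠ 0)).min' (h i)
      let mu : ℝ := Finset.univ.inf' Finset.univ_nonempty (fun i => b i (sel i))
      fun s => (if s = sel then mu else 0) +
        greedy n m fuel (fun i j => if j = sel i then b i j - mu else b i j) s
    else 0

lemma greedy_invariant (n : ℕ) [NeZero n] (m : Fin n → ℕ) :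
    ∀ fuel (b : ∀ i, Fin (m i) → ℝ),
    (∀ i j, 0 ≤ b i j) →
    (∀ i i', ∑ j, b i j = ∑ j, b i' j) →
    ∑ i, (Finset.univ.filter (fun j => b i j ≠ 0)).card ≤ fuel →
    (∀ s, 0 ≤ greedy n m fuel b s) ∧
    (∀ i x, ∑ s ∈ Finset.univ.filter (fun s : ∀ i, Fin (m i) => s i = x),
        greedy n m fuel b s = b i x) := by
  intro fuel
  induction fuel with
  | zero =>
    intro b hb heq hcard
    have hzero : ∀ i j, b i j = 0 := by
      intro i j
      by_contra hne
      have h1 : (Finset.univ.filter (fun j => b i j ≠ 0)).card ≠ 0 := by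
        simp only [ne_eq, Finset.card_eq_zero, Finset.filter_eq_empty_iff, not_forall]
        exact ⟨j, Finset.mem_univ j, by simpa using hne⟩
      have h2 : (Finset.univ.filter (fun j => b i j ≠ 0)).card = 0 := by
        have hsum0 : ∑ i, (Finset.univ.filter (fun j => b i j ≠ 0)).card = 0 :=
          Nat.le_zero.mp hcard
        exact (Finset.sum_eq_zero_iff.mp hsum0) i (Finset.mem_univ i)
      exact h1 h2
    constructor
    · intro s; simp [greedy]
    · intro i x; simp [greedy, hzero i x]
  | succ fuel ih =>
    intro b hb heq hcard
    by_cases h : ∀ i, (Finset.univ.filter (fun j => b i j ≠ 0)).Nonempty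
    · set sel : ∀ i, Fin (m i) :=
        fun i => (Finset.univ.filter (fun j => b i j ≠ 0)).min' (h i) with hsel
      set mu : ℝ := Finset.univ.inf' Finset.univ_nonempty (fun i => b i (sel i)) with hmu
      set b' : ∀ i, Fin (m i) → ℝ :=
        fun i j => if j = sel i then b i j - mu else b i j with hb'def
      have hselne : ∀ i, b i (sel i) ≠ 0 := by
        intro i
        have := Finset.min'_mem (Finset.univ.filter (fun j => b i j ≠ 0)) (h i)
        simpa using this
      have hmule : ∀ i, mu ≤ b i (sel i) := fun i =>
        Finset.inf'_le _ (Finset.mem_univ i)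
      have hmupos : 0 < mu := by
        rw [hmu, Finset.lt_inf'_iff]
        exact fun i _ => lt_of_le_of_ne (hb i (sel i)) (Ne.symm (hselne i))
      have hb'0 : ∀ i j, 0 ≤ b' i j := by
        intro i j
        simp only [hb'def]
        split
        · next hj => rw [hj]; linarith [hmule i]
        · exact hb i j
      have hb'eq : ∀ i j, b' i j = b i j - (if j = sel i then mu else 0) := by
        intro i j; simp only [hb'def]; split <;> simp
      have hrow : ∀ i, ∑ j, b' i j = (∑ j, b i j) - mu := by
        intro i
        simp [hb'eq, Finset.sum_sub_distrib, Finset.sum_ite_eq']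
      have heq' : ∀ i i', ∑ j, b' i j = ∑ j, b' i' j := by
        intro i i'; rw [hrow, hrow, heq i i']
      -- cardinality decreases
      obtain ⟨i0, -, hmu_eq⟩ :=
        Finset.exists_mem_eq_inf' (Finset.univ_nonempty) (fun i => b i (sel i))
      have hsub : ∀ i, (Finset.univ.filter (fun j => b' i j ≠ 0)) ⊆
          (Finset.univ.filter (fun j => b i j ≠ 0)) := by
        intro i j hj
        simp only [Finset.mem_filter, Finset.mem_univ, true_and] at hj ⊢
        by_cases hje : j = sel i
        · rw [hje]; exact hselne i
        · simpa [hb'def, hje] using hj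
      have hstrict : (Finset.univ.filter (fun j => b' i0 j ≠ 0)).card <
          (Finset.univ.filter (fun j => b i0 j ≠ 0)).card := by
        apply Finset.card_lt_card
        refine ⟨hsub i0, ?_⟩
        intro hss
        have hmem : sel i0 ∈ Finset.univ.filter (fun j => b' i0 j ≠ 0) := by
          apply hss
          simp [hselne i0]
        simp only [Finset.mem_filter, hb'def] at hmem
        exact hmem.2 (by simp [hmu, hmu_eq])
      have hcard' : ∑ i, (Finset.univ.filter (fun j => b' i j ≠ 0)).card ≤ fuel := by
        have hlt : ∑ i, (Finset.univ.filter (fun j => b' i j ≠ 0)).card <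
            ∑ i, (Finset.univ.filter (fun j => b i j ≠ 0)).card := by
          apply Finset.sum_lt_sum
          · exact fun i _ => Finset.card_le_card (hsub i)
          · exact ⟨i0, Finset.mem_univ i0, hstrict⟩
        omega
      obtain ⟨ihpos, ihsum⟩ := ih b' hb'0 heq' hcard'
      have hunfold : ∀ s, greedy n m (fuel + 1) b s =
          (if s = sel then mu else 0) + greedy n m fuel b' s := by
        intro s
        rw [greedy, dif_pos h]
      constructor
      · intro s
        rw [hunfold]
        have : (0:ℝ) ≤ if s = sel then mu else 0 := by
          split
          · exact le_of_lt hmupos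
          · exact le_refl 0
        linarith [ihpos s]
      · intro i x
        simp only [hunfold]
        rw [Finset.sum_add_distrib, ihsum i x]
        have hind : ∑ s ∈ Finset.univ.filter (fun s : ∀ i, Fin (m i) => s i = x),
            (if s = sel then mu else 0) = if sel i = x then mu else 0 := by
          rw [Finset.sum_ite_eq']
          simp [Finset.mem_filter]
        rw [hind]
        by_cases hx : sel i = x
        · subst hx
          simp only [hb'def, if_pos rfl, if_true]
          ring
        · have hx' : ¬ x = sel i := fun hh => hx hh.symm
          simp [hb'def, hx, hx']
    · push_neg at h
      obtain ⟨i0, hi0⟩ := h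
      rw [Finset.filter_eq_empty_iff] at hi0
      have hrow0 : ∑ j, b i0 j = 0 := by
        refine Finset.sum_eq_zero fun j _ => ?_
        have := hi0 (Finset.mem_univ j)
        simpa using this
      have hzero : ∀ i j, b i j = 0 := by
        intro i j
        have hs : ∑ j, b i j = 0 := (heq i i0).trans hrow0
        have := (Finset.sum_eq_zero_iff_of_nonneg (fun j _ => hb i j)).mp hs
        exact this j (Finset.mem_univ j)
      have hnot : ¬ ∀ i, (Finset.univ.filter (fun j => b i j ≠ 0)).Nonempty := by
        intro hcon
        obtain ⟨j, hj⟩ := hcon i0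
        simp only [Finset.mem_filter] at hj
        exact hj.2 (hzero i0 j)
      constructor
      · intro s; rw [greedy, dif_neg hnot]; simp
      · intro i x; simp [greedy, dif_neg hnot, hzero i x]

/-- Algorithm 3 terminates (within `∑ i, m i` steps) and produces a nonnegative
vector satisfying all transport constraints. -/
theorem greedy_terminates_feasible (n : ℕ) [NeZero n] (m : Fin n → ℕ)
    (d : ∀ i, Fin (m i) → ℝ) (hd0 : ∀ i j, 0 ≤ d i j)
    (hd1 : ∀ i, ∑ j, d i j = 1) :
    (∀ s : ∀ i, Fin (m i), 0 ≤ greedy n m (∑ i, m i) d s) ∧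
    (∀ i (x : Fin (m i)),
      ∑ s ∈ Finset.univ.filter (fun s : ∀ i, Fin (m i) => s i = x),
        greedy n m (∑ i, m i) d s = d i x) := by
  apply greedy_invariant n m (∑ i, m i) d hd0
  · intro i i'; rw [hd1 i, hd1 i']
  · calc ∑ i, (Finset.univ.filter (fun j => d i j ≠ 0)).card
        ≤ ∑ i, (Finset.univ : Finset (Fin (m i))).card :=
          Finset.sum_le_sum fun i _ => Finset.card_le_card (Finset.filter_subset _ _)
      _ = ∑ i, m i := by simp
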